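/- Every 2m-tree-connected multigraph G (i.e., G contains 2m pairwise edge-disjoint spanning trees) has a bipartite spanning subgraph H containing m pairwise edge-disjoint spanning trees such that for every vertex set X, d_H(X) ≥ d_G(X)/2. -/

import Mathlib

open Finset

namespace Paper

variable {V : Type*} [Fintype V] [DecidableEq V]

/-- Bool test: the edge `e` has exactly one end in `X`. -/
def crossB (X : Finset V) : Sym2 V → Bool :=
  Sym2.lift ⟨fun a b => xor (decide (a ∈ X)) (decide (b ∈ X)), by
    intro a b; simp [Bool.xor_comm]⟩

/-- Bool test: both ends of the edge `e` lie in `X`. -/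
def bothB (X : Finset V) : Sym2 V → Bool :=
  Sym2.lift ⟨fun a b => decide (a ∈ X) && decide (b ∈ X), by
    intro a b; simp [Bool.and_comm]⟩

/-- A finite multigraph on vertex set `V`: a multiset of loopless edges. -/
structure MGraph (V : Type*) where
  edges : Multiset (Sym2 V)
  loopless : ∀ e ∈ edges, ¬ e.IsDiag

/-- Number of edges of the edge multiset `E` with exactly one end in `X`. -/
def cutE (E : Multiset (Sym2 V)) (X : Finset V) : ℕ :=
  (E.filter (fun e => crossB X e = true)).card

/-- `d_G(X)`: number of edges of `G` with exactly one end in `X`. -/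
def cut (G : MGraph V) (X : Finset V) : ℕ := cutE G.edges X

/-- Degree of a vertex in a multigraph. -/
def deg (G : MGraph V) (v : V) : ℕ := cut G {v}

/-- Number of edges of `E` with both ends in `S`. -/
def insideE (E : Multiset (Sym2 V)) (S : Finset V) : ℕ :=
  (E.filter (fun e => bothB S e = true)).card

/-- `P` is a partition of the vertex set `W` into nonempty parts. -/
def IsPartitionOf (W : Finset V) (P : Finset (Finset V)) : Prop :=
  (∀ A ∈ P, A.Nonempty) ∧ (∀ A ∈ P, ∀ B ∈ P, A ≠ B → Disjoint A B) ∧ P.sup id = W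

/-- Number of edges of `E` joining different parts of `P`. -/
def ePart (E : Multiset (Sym2 V)) (P : Finset (Finset V)) : ℕ :=
  (E.filter (fun e => decide (∀ A ∈ P, bothB A e = false) = true)).card

/-- The edge multiset `E`, restricted to the vertex set `W`, is `l`-partition-connected:
for every partition `P` of `W`, the number of edges (inside `W`) joining different parts
is at least `Σ_{A∈P} l(A) − l(W)`. -/
def LPCOn (E : Multiset (Sym2 V)) (W : Finset V) (l : Finset V → ℝ) : Prop :=
  ∀ P : Finset (Finset V), IsPartitionOf W P →
    (ePart (E.filter (fun e => bothB W e = true)) P : ℝ) ≥ (∑ A ∈ P, l A) - l W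

/-- The multigraph `G` is `l`-partition-connected. -/
def LPC (G : MGraph V) (l : Finset V → ℝ) : Prop := LPCOn G.edges Finset.univ l

/-- `t`-partition-connectivity (constant function `t`). -/
def PC (G : MGraph V) (t : ℝ) : Prop := LPC G (fun _ => t)

/-- `m`-tree-connectivity, via the Nash-Williams–Tutte theorem identified with
`m`-partition-connectivity. -/
def TreeConn (m : ℕ) (G : MGraph V) : Prop := PC G (m : ℝ)

/-- `G` is properly `c`-colorable. -/
def MColorable (c : ℕ) (G : MGraph V) : Prop :=
  ∃ f : V → Fin c, ∀ a b : V, s(a, b) ∈ G.edges → f a ≠ f b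

/-- `G` is bipartite. -/
def MBipartite (G : MGraph V) : Prop := MColorable 2 G

/-- `P` is the partition of `W` into the (vertex sets of the) `l`-partition-connected
components of the graph with edge multiset `E` restricted to `W`: each part induces an
`l`-partition-connected subgraph, and every set inducing an `l`-partition-connected
subgraph lies inside one part. -/
def IsLPCComponents (E : Multiset (Sym2 V)) (W : Finset V) (l : Finset V → ℝ)
    (P : Finset (Finset V)) : Prop :=
  IsPartitionOf W P ∧ (∀ A ∈ P, LPCOn E A l) ∧
    ∀ B ⊆ W, B.Nonempty → LPCOn E B l → ∃ A ∈ P, B ⊆ A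

/-- `Θ_l` computed with respect to the component partition `P` of `W`. -/
noncomputable def ThetaVal (E : Multiset (Sym2 V)) (W : Finset V) (l : Finset V → ℝ)
    (P : Finset (Finset V)) : ℝ :=
  (∑ A ∈ P, l A) - (ePart (E.filter (fun e => bothB W e = true)) P : ℝ)

/-- Intersecting supermodular set function. -/
def IntersectingSupermodular (l : Finset V → ℝ) : Prop :=
  ∀ A B : Finset V, (A ∩ B).Nonempty → l (A ∩ B) + l (A ∪ B) ≥ l A + l B

/-- Nonincreasing set function. -/
def Nonincreasing (l : Finset V → ℝ) : Prop :=
  ∀ A B : Finset V, A.Nonempty → A ⊆ B → l A ≥ l B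

/-- Edge multiset of a simple graph. -/
noncomputable def SGedges (G : SimpleGraph V) : Multiset (Sym2 V) :=
  (Set.toFinite G.edgeSet).toFinset.val

/-- `m`-tree-connectivity of a simple graph, via partition-connectivity. -/
noncomputable def TreeConnSG (m : ℕ) (G : SimpleGraph V) : Prop :=
  LPCOn (SGedges G) Finset.univ (fun _ => (m : ℝ))

/-- Degree in a simple graph. -/
noncomputable def degSG (G : SimpleGraph V) (v : V) : ℕ := Nat.card (G.neighborSet v)

/-- `G` is `t`-tough. -/
def Tough (t : ℝ) (G : SimpleGraph V) : Prop :=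
  ∀ S : Finset V,
    (Nat.card ((G.induce ((↑S : Set V)ᶜ)).ConnectedComponent) : ℝ) ≤
      max 1 ((S.card : ℝ) / t)

/-- Bool test: the two ends of `e` receive different values under `f`. -/
def diffB {c : ℕ} (f : V → Fin c) : Sym2 V → Bool :=
  Sym2.lift ⟨fun a b => decide (f a ≠ f b), by
    intro a b; simp [ne_comm]⟩

end Paper

open Paper

section Aux

variable {V : Type*} [Fintype V] [DecidableEq V]

def dB {V : Type*} (f : V → Bool) : Sym2 V → Bool :=
  Sym2.lift ⟨fun a b => xor (f a) (f b), fun _ _ => Bool.xor_comm _ _⟩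

lemma bothB_univ (e : Sym2 V) : bothB (univ : Finset V) e = true := by
  induction e using Sym2.ind with
  | _ a b => simp [bothB]

lemma filter_bothB_univ (E : Multiset (Sym2 V)) :
    E.filter (fun e => bothB (univ : Finset V) e = true) = E := by
  rw [Multiset.filter_eq_self]
  intro e _; simp [bothB_univ]

lemma part_unique {P : Finset (Finset V)} (hP : IsPartitionOf (univ : Finset V) P)
    (v : V) : ∃ A ∈ P, v ∈ A ∧ ∀ B ∈ P, v ∈ B → B = A := by
  have hv : v ∈ P.sup id := by rw [hP.2.2]; exact mem_univ v
  obtain ⟨A, hA, hvA⟩ := Finset.mem_sup.1 hv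
  refine ⟨A, hA, hvA, fun B hB hvB => ?_⟩
  by_contra hne
  exact Finset.disjoint_left.1 (hP.2.1 B hB A hA hne) hvB hvA

lemma crossB_mk (X : Finset V) (a b : V) :
    crossB X (s(a, b)) = xor (decide (a ∈ X)) (decide (b ∈ X)) := rfl

lemma bothB_mk (X : Finset V) (a b : V) :
    bothB X (s(a, b)) = (decide (a ∈ X) && decide (b ∈ X)) := rfl

lemma cross_sum {P : Finset (Finset V)} (hP : IsPartitionOf (univ : Finset V) P)
    {e : Sym2 V} (he : ¬ e.IsDiag) :
    ∑ A ∈ P, (if crossB A e = true then 1 else 0) =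
      2 * (if (∀ A ∈ P, bothB A e = false) then 1 else 0) := by
  induction e using Sym2.ind with
  | _ a b =>
    rw [Sym2.mk_isDiag_iff] at he
    obtain ⟨Aa, hAa, haAa, huAa⟩ := part_unique hP a
    obtain ⟨Ab, hAb, hbAb, huAb⟩ := part_unique hP b
    by_cases hab : Aa = Ab
    · subst hab
      rw [Finset.sum_eq_zero, if_neg, mul_zero]
      · intro hall
        have := hall Aa hAa
        simp [bothB_mk, haAa, hbAb] at this
      · intro C hC
        rw [if_neg]
        rcases Decidable.em (a ∈ C) with ha | ha
        · have hb : b ∈ C := by rw [huAa C hC ha]; exact hbAb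
          simp [crossB_mk, ha, hb]
        · rcases Decidable.em (b ∈ C) with hb | hb
          · have : a ∈ C := by rw [huAb C hC hb]; exact haAa
            exact absurd this ha
          · simp [crossB_mk, ha, hb]
    · have hbAa : b ∉ Aa := fun hb => hab (huAb Aa hAa hb)
      have haAb : a ∉ Ab := fun ha => hab (huAa Ab hAb ha).symm
      rw [if_pos, mul_one]
      · have step : ∀ C ∈ P, (if crossB C (s(a, b)) = true then 1 else 0) =
            (if C = Aa then 1 else 0) + (if C = Ab then 1 else 0) := by
          intro C hC
          by_cases h1 : C = Aa
          · subst h1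
            simp [crossB_mk, haAa, hbAa, hab]
          · by_cases h2 : C = Ab
            · subst h2
              simp [crossB_mk, hbAb, haAb, h1]
            · have ha : a ∉ C := fun h => h1 (huAa C hC h)
              have hb : b ∉ C := fun h => h2 (huAb C hC h)
              simp [crossB_mk, ha, hb, h1, h2]
        rw [Finset.sum_congr rfl step, Finset.sum_add_distrib,
          Finset.sum_ite_eq' P Aa (fun _ => 1), Finset.sum_ite_eq' P Ab (fun _ => 1),
          if_pos hAa, if_pos hAb]
      · intro C hC
        simp only [bothB_mk, Bool.and_eq_false_iff, decide_eq_false_iff_not]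
        by_cases ha : a ∈ C
        · exact Or.inr ((huAa C hC ha) ▸ hbAa)
        · exact Or.inl ha

lemma sum_cut_eq {E : Multiset (Sym2 V)} (hE : ∀ e ∈ E, ¬ e.IsDiag)
    {P : Finset (Finset V)} (hP : IsPartitionOf (univ : Finset V) P) :
    ∑ A ∈ P, cutE E A = 2 * ePart E P := by
  induction E using Multiset.induction with
  | empty => simp [cutE, ePart]
  | cons e E ih =>
    have he := hE e (Multiset.mem_cons_self e E)
    have hE' : ∀ x ∈ E, ¬ x.IsDiag := fun x hx => hE x (Multiset.mem_cons_of_mem hx)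
    have h1 : ∀ A : Finset V, cutE (e ::ₘ E) A =
        (if crossB A e = true then 1 else 0) + cutE E A := by
      intro A
      rw [cutE, Multiset.filter_cons, Multiset.card_add, cutE]
      congr 1
      split <;> simp
    have h2 : ePart (e ::ₘ E) P =
        (if (∀ A ∈ P, bothB A e = false) then 1 else 0) + ePart E P := by
      rw [ePart, Multiset.filter_cons, Multiset.card_add, ePart]
      congr 1
      rw [apply_ite Multiset.card, Multiset.card_singleton, Multiset.card_zero]
      simp
    simp only [h1, h2, Finset.sum_add_distrib, ih hE', cross_sum hP he]
    ring

end Aux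

theorem stmt5 {V : Type*} [Fintype V] [DecidableEq V] (m : ℕ) (G : MGraph V)
    (h : TreeConn (2 * m) G) :
    ∃ H : MGraph V, H.edges ≤ G.edges ∧ MBipartite H ∧ TreeConn m H ∧
      ∀ X : Finset V, 2 * cut H X ≥ cut G X := by
  classical
  obtain ⟨f, hf⟩ := Finite.exists_max (fun f : V → Bool =>
    Multiset.card (G.edges.filter (fun e => dB f e = true)))
  set E := G.edges with hE
  refine ⟨⟨E.filter (fun e => dB f e = true),
    fun e he => G.loopless e (Multiset.mem_of_mem_filter he)⟩,
    Multiset.filter_le _ _, ?_, ?_, ?_⟩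
  -- the cut inequality, proved first as `hcut`
  all_goals
    have hcut : ∀ X : Finset V,
        2 * Multiset.card ((E.filter (fun e => dB f e = true)).filter
            (fun e => crossB X e = true)) ≥
          Multiset.card (E.filter (fun e => crossB X e = true)) := by
      intro X
      set g : V → Bool := fun v => xor (decide (v ∈ X)) (f v) with hg
      have key : ∀ e : Sym2 V, dB g e = xor (dB f e) (crossB X e) := by
        intro e
        induction e using Sym2.ind with
        | _ a b =>
          simp only [dB, crossB, Sym2.lift_mk, hg]
          cases hfa : f a <;> cases hfb : f b <;> cases hxa : (decide (a ∈ X)) <;>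
            cases hxb : (decide (b ∈ X)) <;> simp [hfa, hfb, hxa, hxb]
      have hsplitE : E.filter (fun e => crossB X e = true)
          + E.filter (fun e => ¬ (crossB X e = true)) = E :=
        Multiset.filter_add_not _ _
      -- split the count of f-crossing edges
      have hfsplit : Multiset.card (E.filter (fun e => dB f e = true)) =
          Multiset.card ((E.filter (fun e => crossB X e = true)).filter (fun e => dB f e = true))
          + Multiset.card ((E.filter (fun e => ¬ (crossB X e = true))).filter
              (fun e => dB f e = true)) := by
        conv_lhs => rw [← hsplitE]
        rw [Multiset.filter_add, Multiset.card_add]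
      have hgsplit : Multiset.card (E.filter (fun e => dB g e = true)) =
          Multiset.card ((E.filter (fun e => crossB X e = true)).filter
            (fun e => ¬ (dB f e = true)))
          + Multiset.card ((E.filter (fun e => ¬ (crossB X e = true))).filter
              (fun e => dB f e = true)) := by
        conv_lhs => rw [← hsplitE]
        rw [Multiset.filter_add, Multiset.card_add]
        congr 1
        · apply congrArg
          apply Multiset.filter_congr
          intro e he
          have hc : crossB X e = true := (Multiset.mem_filter.1 he).2
          rw [key e, hc]
          cases dB f e <;> simp
        · apply congrArg
          apply Multiset.filter_congr
          intro e he
          have hc : ¬ (crossB X e = true) := (Multiset.mem_filter.1 he).2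
          rw [key e, Bool.not_eq_true] at *
          rw [hc]
          cases dB f e <;> simp
      have hmax := hf g
      rw [hgsplit, hfsplit] at hmax
      have hle : Multiset.card ((E.filter (fun e => crossB X e = true)).filter
            (fun e => ¬ (dB f e = true))) ≤
          Multiset.card ((E.filter (fun e => crossB X e = true)).filter
            (fun e => dB f e = true)) := by omega
      have htot : Multiset.card ((E.filter (fun e => crossB X e = true)).filter
            (fun e => dB f e = true))
          + Multiset.card ((E.filter (fun e => crossB X e = true)).filter
            (fun e => ¬ (dB f e = true))) =
          Multiset.card (E.filter (fun e => crossB X e = true)) := by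
        rw [← Multiset.card_add, Multiset.filter_add_not]
      have hcomm : (E.filter (fun e => dB f e = true)).filter (fun e => crossB X e = true)
          = (E.filter (fun e => crossB X e = true)).filter (fun e => dB f e = true) := by
        rw [Multiset.filter_filter, Multiset.filter_filter]
        exact Multiset.filter_congr (fun e _ => and_comm)
      rw [hcomm]
      omega
  case refine_1 =>
    -- bipartite
    refine ⟨fun v => if f v then 1 else 0, fun a b hab => ?_⟩
    have : dB f (s(a, b)) = true := by
      have := Multiset.mem_filter.1 hab
      exact this.2
    have hne : f a ≠ f b := by
      intro hcon
      rw [show dB f (s(a, b)) = xor (f a) (f b) from rfl, hcon] at this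
      simp at this
    intro hcon
    apply hne
    cases ha : f a <;> cases hb : f b <;> simp [ha, hb] at hcon ⊢
  case refine_2 =>
    -- tree-connectivity
    intro P hP
    have hG := h P hP
    simp only [filter_bothB_univ] at hG ⊢
    have e1 := sum_cut_eq G.loopless hP
    have e2 := sum_cut_eq (E := E.filter (fun e => dB f e = true))
      (fun e he => G.loopless e (Multiset.mem_of_mem_filter he)) hP
    have e3 : ∑ A ∈ P, cutE E A ≤ ∑ A ∈ P, 2 * cutE (E.filter (fun e => dB f e = true)) A :=
      Finset.sum_le_sum fun A _ => hcut A
    rw [e1, ← Finset.mul_sum, e2] at e3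
    have h4 : ePart G.edges P ≤ 2 * ePart (E.filter (fun e => dB f e = true)) P := by omega
    rw [Finset.sum_const, nsmul_eq_mul] at hG ⊢
    have h5 : ((ePart G.edges P : ℕ) : ℝ) ≤
        ((2 * ePart (E.filter (fun e => dB f e = true)) P : ℕ) : ℝ) := by exact_mod_cast h4
    push_cast at hG h5 ⊢
    linarith
  case refine_3 =>
    intro X
    exact hcut X
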